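/- Let k be a nonnegative integer, Ω ⊆ ℝ a nonempty open set, and c_i, d_{ij} : Ω → ℝ continuous functions for i, j = 0, …, k. Define, for strictly positive f ∈ C^k(Ω), D(f)(x) = f(x)·[ Σ_{i=0}^{k} c_i(x)·(ln∘f)^{(i)}(x) + Σ_{i=0}^{k} Σ_{j=0}^{k} d_{ij}(x)·(ln∘f)^{(i)}(x)·(ln∘f)^{(j)}(x) ]. Then D satisfies the identity D(f·g·h) − f·D(g·h) − g·D(f·h) − h·D(f·g) + f·g·D(h) + f·h·D(g) + g·h·D(f) = 0 for all strictly positive f, g, h ∈ C^k(Ω). -/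

import Mathlib

open scoped BigOperators

lemma myIterWithinOpen {n : ℕ} {s : Set ℝ} {x : ℝ} (hs : IsOpen s) (hx : x ∈ s) (f : ℝ → ℝ) :
    iteratedDerivWithin n f s x = iteratedDeriv n f x := by
  rw [iteratedDerivWithin, iteratedDeriv, iteratedFDerivWithin_of_isOpen n hs hx]

lemma myIterAdd {n : ℕ} {s : Set ℝ} {x : ℝ} (hs : IsOpen s) (hx : x ∈ s) {F G : ℝ → ℝ}
    (hF : ContDiffOn ℝ n F s) (hG : ContDiffOn ℝ n G s) :
    iteratedDeriv n (fun y => F y + G y) x = iteratedDeriv n F x + iteratedDeriv n G x := by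
  rw [← myIterWithinOpen hs hx, ← myIterWithinOpen hs hx, ← myIterWithinOpen hs hx]
  exact iteratedDerivWithin_add hx hs.uniqueDiffOn (hF x hx) (hG x hx)

lemma mySumExpandL {m : ℕ} (w u v : Fin m → ℝ) :
    ∑ i, w i * (u i + v i) = (∑ i, w i * u i) + ∑ i, w i * v i := by
  rw [← Finset.sum_add_distrib]
  exact Finset.sum_congr rfl fun i _ => by ring

lemma myQExpandL {m : ℕ} (D : Fin m → Fin m → ℝ) (u v w : Fin m → ℝ) :
    ∑ i, ∑ j, D i j * (u i + v i) * w j =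
      (∑ i, ∑ j, D i j * u i * w j) + ∑ i, ∑ j, D i j * v i * w j := by
  rw [← Finset.sum_add_distrib]
  refine Finset.sum_congr rfl fun i _ => ?_
  rw [← Finset.sum_add_distrib]
  exact Finset.sum_congr rfl fun j _ => by ring

lemma myQExpandR {m : ℕ} (D : Fin m → Fin m → ℝ) (u v w : Fin m → ℝ) :
    ∑ i, ∑ j, D i j * u i * (v j + w j) =
      (∑ i, ∑ j, D i j * u i * v j) + ∑ i, ∑ j, D i j * u i * w j := by
  rw [← Finset.sum_add_distrib]
  refine Finset.sum_congr rfl fun i _ => ?_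
  rw [← Finset.sum_add_distrib]
  exact Finset.sum_congr rfl fun j _ => by ring

/-- (Converse for positive functions.) Given continuous `cᵢ, dᵢⱼ : Ω → ℝ`
(`i, j = 0, …, k`), the operator defined for strictly positive `f ∈ C^k(Ω)` by
`D(f)(x) = f(x)·[ Σᵢ cᵢ(x)·(ln∘f)^{(i)}(x) + Σᵢ Σⱼ dᵢⱼ(x)·(ln∘f)^{(i)}(x)·(ln∘f)^{(j)}(x) ]`
satisfies the identity (★) for all strictly positive `f, g, h ∈ C^k(Ω)`. -/
theorem statement14 (k : ℕ) (Ω : Set ℝ) (hΩ : IsOpen Ω) (hΩne : Ω.Nonempty)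
    (c : Fin (k + 1) → ℝ → ℝ) (d : Fin (k + 1) → Fin (k + 1) → ℝ → ℝ)
    (hc : ∀ i, ContinuousOn (c i) Ω) (hd : ∀ i j, ContinuousOn (d i j) Ω)
    (D : (ℝ → ℝ) → (ℝ → ℝ))
    (hD : ∀ f : ℝ → ℝ, ContDiffOn ℝ k f Ω → (∀ x ∈ Ω, 0 < f x) → ∀ x ∈ Ω,
      D f x = f x *
        ((∑ i : Fin (k + 1), c i x * iteratedDeriv i (fun y => Real.log (f y)) x)
          + ∑ i : Fin (k + 1), ∑ j : Fin (k + 1),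
              d i j x * iteratedDeriv i (fun y => Real.log (f y)) x
                * iteratedDeriv j (fun y => Real.log (f y)) x)) :
    ∀ f g h : ℝ → ℝ,
      ContDiffOn ℝ k f Ω → ContDiffOn ℝ k g Ω → ContDiffOn ℝ k h Ω →
      (∀ x ∈ Ω, 0 < f x) → (∀ x ∈ Ω, 0 < g x) → (∀ x ∈ Ω, 0 < h x) →
      ∀ x ∈ Ω,
        D (fun y => f y * g y * h y) x
          - f x * D (fun y => g y * h y) x
          - g x * D (fun y => f y * h y) x
          - h x * D (fun y => f y * g y) x
          + f x * g x * D h x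
          + f x * h x * D g x
          + g x * h x * D f x = 0 := by
  intro f g h hf hg hh hfp hgp hhp x hx
  -- additivity of iterated derivatives of logs of products
  have hpair : ∀ F G : ℝ → ℝ, ContDiffOn ℝ k F Ω → ContDiffOn ℝ k G Ω →
      (∀ y ∈ Ω, 0 < F y) → (∀ y ∈ Ω, 0 < G y) → ∀ i : Fin (k + 1),
      iteratedDeriv i (fun y => Real.log (F y * G y)) x =
        iteratedDeriv i (fun y => Real.log (F y)) x
          + iteratedDeriv i (fun y => Real.log (G y)) x := by
    intro F G hF hG hFp hGp i
    have h1 : (fun y => Real.log (F y * G y)) =ᶠ[nhds x]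
        fun y => Real.log (F y) + Real.log (G y) := by
      filter_upwards [hΩ.mem_nhds hx] with y hy
      exact Real.log_mul (hFp y hy).ne' (hGp y hy).ne'
    rw [h1.iteratedDeriv_eq]
    exact myIterAdd hΩ hx
      ((hF.log fun y hy => (hFp y hy).ne').of_le (by exact_mod_cast i.is_le))
      ((hG.log fun y hy => (hGp y hy).ne').of_le (by exact_mod_cast i.is_le))
  have hfg : ContDiffOn ℝ k (fun y => f y * g y) Ω := hf.mul hg
  have hfh : ContDiffOn ℝ k (fun y => f y * h y) Ω := hf.mul hh
  have hgh : ContDiffOn ℝ k (fun y => g y * h y) Ω := hg.mul hh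
  have hfgh : ContDiffOn ℝ k (fun y => f y * g y * h y) Ω := hfg.mul hh
  have pfg : ∀ y ∈ Ω, 0 < f y * g y := fun y hy => mul_pos (hfp y hy) (hgp y hy)
  have pfh : ∀ y ∈ Ω, 0 < f y * h y := fun y hy => mul_pos (hfp y hy) (hhp y hy)
  have pgh : ∀ y ∈ Ω, 0 < g y * h y := fun y hy => mul_pos (hgp y hy) (hhp y hy)
  have pfgh : ∀ y ∈ Ω, 0 < f y * g y * h y := fun y hy => mul_pos (pfg y hy) (hhp y hy)
  have efg := hpair f g hf hg hfp hgp
  have efh := hpair f h hf hh hfp hhp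
  have egh := hpair g h hg hh hgp hhp
  have efgh : ∀ i : Fin (k + 1),
      iteratedDeriv i (fun y => Real.log (f y * g y * h y)) x =
        iteratedDeriv i (fun y => Real.log (f y)) x
          + iteratedDeriv i (fun y => Real.log (g y)) x
          + iteratedDeriv i (fun y => Real.log (h y)) x := by
    intro i
    have := hpair (fun y => f y * g y) h hfg hh pfg hhp i
    rw [this, efg i]
  simp only [hD (fun y => f y * g y * h y) hfgh pfgh x hx,
    hD (fun y => g y * h y) hgh pgh x hx,
    hD (fun y => f y * h y) hfh pfh x hx,
    hD (fun y => f y * g y) hfg pfg x hx,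
    hD f hf hfp x hx, hD g hg hgp x hx, hD h hh hhp x hx,
    efg, efh, egh, efgh]
  simp only [mul_add, add_mul, Finset.sum_add_distrib]
  ring
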